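/- Let G : U → ℝ be real-analytic on a neighbourhood U of (0,0) in ℝⁿ × ℝ, y-regular of order d > 0 at (0,0), with cᵢ(x) := (∂ⁱG/∂yⁱ)(x,0). Assume that for each i < d there is an analytic cᵢ* with cᵢ(x) = x^{α(d−i)}·cᵢ*(x), where α ∈ ℕⁿ, and that c_k*(0) ≠ 0 for some k < d. Then H(x,y) := x^{−αd}·G(x, x^α·y) extends to a real-analytic function in a neighbourhood of (0,0), y-regular of order at most k at (0,0). -/

import Mathlib

open Filter Topology
open scoped NNReal ENNReal

set_option linter.unusedSectionVars false

namespace MyDiv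

variable {E : Type*} [NormedAddCommGroup E] [NormedSpace ℝ E]

noncomputable def piL (E : Type*) [NormedAddCommGroup E] [NormedSpace ℝ E] :
    (E × ℝ) →L[ℝ] (E × ℝ) :=
  (ContinuousLinearMap.inl ℝ E ℝ).comp (ContinuousLinearMap.fst ℝ E ℝ)

lemma piL_apply (w : E × ℝ) : piL E w = (w.1, 0) := rfl

lemma norm_piL_apply_le (w : E × ℝ) : ‖piL E w‖ ≤ ‖w‖ := by
  rw [piL_apply, Prod.norm_def, Prod.norm_def]
  simp only [norm_zero]
  exact max_le (le_max_left _ _) (le_trans (norm_nonneg _) (le_max_left _ _))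

lemma norm_e : ‖((0 : E), (1 : ℝ))‖ = 1 := by
  rw [Prod.norm_def]; simp

def sigma {m : ℕ} (iF : Fin (m + 1)) : Fin (m + 1) ≃ Fin (m + 1) :=
  (finSuccEquiv' iF).trans (finSuccEquiv' 0).symm

lemma sigma_self {m : ℕ} (iF : Fin (m + 1)) : sigma iF iF = 0 := by
  simp [sigma, finSuccEquiv'_at, finSuccEquiv'_symm_none]

lemma sigma_succAbove {m : ℕ} (iF : Fin (m + 1)) (j : Fin m) :
    sigma iF (iF.succAbove j) = j.succ := by
  simp [sigma, finSuccEquiv'_succAbove, finSuccEquiv'_symm_some, Fin.zero_succAbove]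

/-- the `i`-th term of the divided series -/
noncomputable def term {m : ℕ}
    (P : ContinuousMultilinearMap ℝ (fun _ : Fin (m + 1) => E × ℝ) ℝ) (iF : Fin (m + 1)) :
    ContinuousMultilinearMap ℝ (fun _ : Fin m => E × ℝ) ℝ :=
  ((P.domDomCongr (sigma iF)).curryLeft ((0 : E), (1 : ℝ))).compContinuousLinearMap
    (fun j => if (j : ℕ) < (iF : ℕ) then ContinuousLinearMap.id ℝ (E × ℝ) else piL E)

lemma term_apply {m : ℕ}
    (P : ContinuousMultilinearMap ℝ (fun _ : Fin (m + 1) => E × ℝ) ℝ) (iF : Fin (m + 1))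
    (u : Fin m → E × ℝ) :
    term P iF u =
      P (iF.insertNth ((0 : E), (1 : ℝ))
        (fun j => if (j : ℕ) < (iF : ℕ) then u j else piL E (u j))) := by
  rw [term, ContinuousMultilinearMap.compContinuousLinearMap_apply,
    ContinuousMultilinearMap.curryLeft_apply, ContinuousMultilinearMap.domDomCongr_apply]
  congr 1
  funext s
  refine Fin.succAboveCases iF ?_ ?_ s
  · rw [sigma_self, Fin.insertNth_apply_same]
    simp
  · intro j
    rw [sigma_succAbove, Fin.insertNth_apply_succAbove]
    simp only [Fin.cons_succ]
    split <;> simp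

lemma norm_term_le {m : ℕ}
    (P : ContinuousMultilinearMap ℝ (fun _ : Fin (m + 1) => E × ℝ) ℝ) (iF : Fin (m + 1)) :
    ‖term P iF‖ ≤ ‖P‖ := by
  refine ContinuousMultilinearMap.opNorm_le_bound (norm_nonneg P) fun u => ?_
  rw [term_apply]
  set v : Fin (m + 1) → E × ℝ := iF.insertNth ((0 : E), (1 : ℝ))
      (fun j => if (j : ℕ) < (iF : ℕ) then u j else piL E (u j)) with hv
  refine le_trans (P.le_opNorm v) ?_
  refine mul_le_mul_of_nonneg_left ?_ (norm_nonneg P)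
  rw [Fin.prod_univ_succAbove _ iF]
  have h1 : v iF = ((0 : E), (1 : ℝ)) := Fin.insertNth_apply_same _ _ _
  rw [h1, norm_e, one_mul]
  refine Finset.prod_le_prod (fun j _ => norm_nonneg _) fun j _ => ?_
  have h2 : v (iF.succAbove j) = if (j : ℕ) < (iF : ℕ) then u j else piL E (u j) :=
    Fin.insertNth_apply_succAbove _ _ _ _
  rw [h2]
  split
  · exact le_refl _
  · exact norm_piL_apply_le _

end MyDiv

namespace MyDiv2
open MyDiv

variable {E : Type*} [NormedAddCommGroup E] [NormedSpace ℝ E]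

/-- the family which is `w` in slots `< i` and `πw` in slots `≥ i`. -/
noncomputable def Vna {m : ℕ} (w : E × ℝ) (i : ℕ) : Fin (m + 1) → E × ℝ :=
  fun s => if (s : ℕ) < i then w else piL E w

lemma term_diag {m : ℕ}
    (P : ContinuousMultilinearMap ℝ (fun _ : Fin (m + 1) => E × ℝ) ℝ) (iF : Fin (m + 1))
    (w : E × ℝ) :
    term P iF (fun _ => w) =
      P (Function.update (Vna w (iF : ℕ)) iF ((0 : E), (1 : ℝ))) := by
  rw [term_apply]
  congr 1
  funext s
  refine Fin.succAboveCases iF ?_ ?_ s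
  · rw [Fin.insertNth_apply_same, Function.update_self]
  · intro j
    rw [Fin.insertNth_apply_succAbove,
      Function.update_of_ne (Fin.succAbove_ne iF j)]
    unfold Vna
    rcases lt_or_ge ((j : ℕ)) ((iF : ℕ)) with h | h
    · have hs : iF.succAbove j = j.castSucc := by
        apply Fin.succAbove_of_castSucc_lt
        rwa [Fin.lt_def, Fin.coe_castSucc]
      rw [if_pos h, hs]
      rw [if_pos (by simpa using h)]
    · have hs : iF.succAbove j = j.succ := by
        apply Fin.succAbove_of_le_castSucc
        rwa [Fin.le_def, Fin.coe_castSucc]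
      rw [if_neg (not_lt.mpr h), hs]
      rw [if_neg (by simp; omega)]

lemma y_mul_term_diag {m : ℕ}
    (P : ContinuousMultilinearMap ℝ (fun _ : Fin (m + 1) => E × ℝ) ℝ) (iF : Fin (m + 1))
    (w : E × ℝ) :
    w.2 * term P iF (fun _ => w) =
      P (Vna w ((iF : ℕ) + 1)) - P (Vna w (iF : ℕ)) := by
  have e1 : (Vna w ((iF : ℕ) + 1) : Fin (m+1) → E × ℝ) =
      Function.update (Vna w (iF : ℕ)) iF w := by
    funext s
    rcases eq_or_ne s iF with rfl | hne
    · rw [Function.update_self]; unfold Vna; rw [if_pos (by omega)]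
    · rw [Function.update_of_ne hne]
      unfold Vna
      have : (s : ℕ) ≠ (iF : ℕ) := fun h => hne (Fin.ext h)
      by_cases h : (s : ℕ) < (iF : ℕ)
      · rw [if_pos (by omega), if_pos h]
      · rw [if_neg (by omega), if_neg h]
  have e2 : (Vna w (iF : ℕ) : Fin (m+1) → E × ℝ) =
      Function.update (Vna w (iF : ℕ)) iF (piL E w) := by
    funext s
    rcases eq_or_ne s iF with rfl | hne
    · rw [Function.update_self]; unfold Vna; rw [if_neg (by omega)]
    · rw [Function.update_of_ne hne]
  have e3 : w - piL E w = w.2 • ((0 : E), (1 : ℝ)) := by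
    rw [piL_apply, Prod.smul_mk, smul_zero]
    ext <;> simp
  rw [term_diag, ← smul_eq_mul, ← P.map_update_smul, ← e3, P.map_update_sub, ← e1, ← e2]

lemma y_mul_sum_diag {m : ℕ}
    (P : ContinuousMultilinearMap ℝ (fun _ : Fin (m + 1) => E × ℝ) ℝ) (w : E × ℝ) :
    w.2 * (∑ iF : Fin (m + 1), term P iF (fun _ => w)) =
      P (fun _ => w) - P (fun _ => piL E w) := by
  rw [Finset.mul_sum]
  have : ∀ iF : Fin (m + 1), w.2 * term P iF (fun _ => w) =
      (fun i : ℕ => P (Vna w i)) ((iF : ℕ) + 1) - (fun i : ℕ => P (Vna w i)) (iF : ℕ) :=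
    fun iF => y_mul_term_diag P iF w
  rw [Finset.sum_congr rfl (fun iF _ => this iF)]
  have htel := Fin.sum_univ_eq_sum_range
    (fun i : ℕ => (fun i : ℕ => P (Vna w i)) (i + 1) - (fun i : ℕ => P (Vna w i)) i) (m + 1)
  rw [htel, Finset.sum_range_sub (fun i : ℕ => P (Vna w i)) (m + 1)]
  have hA : (Vna w (m + 1) : Fin (m+1) → E × ℝ) = fun _ => w := by
    funext s; unfold Vna; rw [if_pos s.isLt]
  have hB : (Vna w 0 : Fin (m+1) → E × ℝ) = fun _ => piL E w := by
    funext s; unfold Vna; rw [if_neg (by omega)]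
  rw [hA, hB]

end MyDiv2

namespace MyDiv3
open MyDiv MyDiv2

variable {E : Type*} [NormedAddCommGroup E] [NormedSpace ℝ E]

/-- the formal quotient series -/
noncomputable def qSeries (p : FormalMultilinearSeries ℝ (E × ℝ) ℝ) :
    FormalMultilinearSeries ℝ (E × ℝ) ℝ :=
  fun m => ∑ iF : Fin (m + 1), term (p (m + 1)) iF

lemma norm_qSeries_le (p : FormalMultilinearSeries ℝ (E × ℝ) ℝ) (m : ℕ) :
    ‖qSeries p m‖ ≤ (m + 1 : ℝ) * ‖p (m + 1)‖ := by
  refine le_trans (norm_sum_le _ _) ?_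
  have : ∀ iF : Fin (m + 1), ‖term (p (m + 1)) iF‖ ≤ ‖p (m + 1)‖ :=
    fun iF => norm_term_le _ _
  calc ∑ iF : Fin (m + 1), ‖term (p (m + 1)) iF‖
      ≤ ∑ _iF : Fin (m + 1), ‖p (m + 1)‖ := Finset.sum_le_sum fun iF _ => this iF
    _ = (m + 1 : ℝ) * ‖p (m + 1)‖ := by
        rw [Finset.sum_const, Finset.card_univ, Fintype.card_fin, nsmul_eq_mul]
        push_cast
        ring

lemma aux_pow_bound (n : ℕ) : ((n : ℝ) + 1) / 2 ^ n ≤ 2 := by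
  rw [div_le_iff₀ (by positivity)]
  have h := Nat.lt_two_pow_self (n := n + 1)
  have : ((n : ℝ) + 1) ≤ 2 ^ (n + 1) := by exact_mod_cast h.le
  calc ((n : ℝ) + 1) ≤ 2 ^ (n + 1) := this
    _ = 2 * 2 ^ n := by ring

lemma radius_qSeries_pos (p : FormalMultilinearSeries ℝ (E × ℝ) ℝ)
    (hp : 0 < p.radius) : 0 < (qSeries p).radius := by
  obtain ⟨r, hr0, hrlt⟩ := ENNReal.lt_iff_exists_nnreal_btwn.mp hp
  have hr0' : (0 : ℝ) < (r : ℝ) := by exact_mod_cast hr0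
  obtain ⟨C, hC0, hC⟩ := p.norm_mul_pow_le_of_lt_radius hrlt
  have hb : ∀ n, ‖qSeries p n‖ * ((r / 2 : ℝ≥0) : ℝ) ^ n ≤ 2 * (C / (r : ℝ)) := by
    intro n
    have h1 : ‖qSeries p n‖ * ((r / 2 : ℝ≥0) : ℝ) ^ n ≤
        ((n + 1 : ℝ) * ‖p (n + 1)‖) * ((r : ℝ) / 2) ^ n := by
      have : ((r / 2 : ℝ≥0) : ℝ) = (r : ℝ) / 2 := by
        push_cast; ring
      rw [this]
      exact mul_le_mul_of_nonneg_right (norm_qSeries_le p n) (by positivity)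
    refine h1.trans ?_
    have key : ((n : ℝ) + 1) * ‖p (n + 1)‖ * ((r : ℝ) / 2) ^ n =
        (((n : ℝ) + 1) / 2 ^ n) * ((‖p (n + 1)‖ * (r : ℝ) ^ (n + 1)) / (r : ℝ)) := by
      field_simp
      rw [mul_assoc _ (((r : ℝ) / 2) ^ n), ← mul_pow, div_mul_cancel₀ _ two_ne_zero]; ring
    rw [key]
    refine mul_le_mul (aux_pow_bound n) ?_ (by positivity) (by norm_num)
    gcongr
    exact hC (n + 1)
  have hle := (qSeries p).le_radius_of_bound (2 * (C / (r : ℝ))) hb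
  refine lt_of_lt_of_le ?_ hle
  have : r / 2 ≠ (0 : ℝ≥0) := by
    intro h
    rw [div_eq_zero_iff] at h
    rcases h with h | h
    · exact absurd h (by exact_mod_cast hr0.ne')
    · norm_num at h
  exact_mod_cast pos_iff_ne_zero.mpr (by exact_mod_cast this)

end MyDiv3

namespace MyDiv4
open MyDiv MyDiv2 MyDiv3

variable {E : Type*} [NormedAddCommGroup E] [NormedSpace ℝ E]

theorem analytic_div_snd {f : E × ℝ → ℝ} (hf : AnalyticAt ℝ f (0 : E × ℝ))
    (h0 : ∀ᶠ x in nhds (0 : E), f (x, 0) = 0) :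
    ∃ g : E × ℝ → ℝ, AnalyticAt ℝ g 0 ∧ ∀ᶠ w in nhds (0 : E × ℝ), f w = w.2 * g w := by
  obtain ⟨p, hp⟩ := hf
  obtain ⟨r, hb⟩ := hp
  have hrpos : 0 < r := hb.r_pos
  have hqrad : 0 < (qSeries p).radius :=
    radius_qSeries_pos p (lt_of_lt_of_le hrpos hb.r_le)
  have hg := (qSeries p).hasFPowerSeriesOnBall hqrad
  refine ⟨(qSeries p).sum, hg.analyticAt, ?_⟩
  obtain ⟨ε₁, hε₁pos, hε₁⟩ := Metric.eventually_nhds_iff_ball.mp h0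
  obtain ⟨ρ', hρ'0, hρ'lt⟩ := ENNReal.lt_iff_exists_nnreal_btwn.mp (lt_min hrpos hqrad)
  set ρ : ℝ := min ε₁ (ρ' : ℝ) with hρ
  have hρpos : 0 < ρ := lt_min hε₁pos (by exact_mod_cast hρ'0)
  filter_upwards [Metric.ball_mem_nhds (0 : E × ℝ) hρpos] with w hw
  rw [mem_ball_zero_iff] at hw
  -- membership facts
  have hnw : ‖w‖₊ < ρ' := by
    have : ‖w‖ < (ρ' : ℝ) := lt_of_lt_of_le hw (min_le_right _ _)
    exact_mod_cast this
  have hwr : w ∈ Metric.eball (0 : E × ℝ) r := by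
    rw [Metric.mem_eball, edist_zero_right]
    exact lt_of_lt_of_le (by exact_mod_cast hnw) ((le_min_iff.mp hρ'lt.le).1)
  have hπle : ‖piL E w‖₊ ≤ ‖w‖₊ := by
    have := norm_piL_apply_le w
    exact_mod_cast this
  have hwπr : piL E w ∈ Metric.eball (0 : E × ℝ) r := by
    rw [Metric.mem_eball, edist_zero_right]
    exact lt_of_lt_of_le (by exact_mod_cast lt_of_le_of_lt hπle hnw)
      ((le_min_iff.mp hρ'lt.le).1)
  have hwq : w ∈ Metric.eball (0 : E × ℝ) (qSeries p).radius := by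
    rw [Metric.mem_eball, edist_zero_right]
    exact lt_of_lt_of_le (by exact_mod_cast hnw) ((le_min_iff.mp hρ'lt.le).2)
  -- the four HasSum statements
  have hs1 : HasSum (fun m => p m (fun _ => w)) (f w) := by
    have := hb.hasSum hwr
    simpa using this
  have hfπ : f (piL E w) = 0 := by
    have h1 : ‖w.1‖ < ε₁ := by
      refine lt_of_le_of_lt ?_ (lt_of_lt_of_le hw (min_le_left _ _))
      rw [Prod.norm_def]; exact le_max_left _ _
    have := hε₁ w.1 (by rwa [mem_ball_zero_iff])
    rw [piL_apply]
    exact this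
  have hs2 : HasSum (fun m => p m (fun _ => piL E w)) 0 := by
    have := hb.hasSum hwπr
    rw [zero_add, hfπ] at this
    exact this
  have hs3 : HasSum (fun m => (qSeries p) m (fun _ => w)) ((qSeries p).sum w) := by
    have := hg.hasSum hwq
    simpa using this
  have hs4 : HasSum (fun m => w.2 * ((qSeries p) m (fun _ => w)))
      (w.2 * (qSeries p).sum w) := hs3.mul_left w.2
  -- rewrite terms of hs4 via the telescoping identity
  have hterm : (fun m => w.2 * ((qSeries p) m (fun _ => w))) =
      fun m => p (m + 1) (fun _ => w) - p (m + 1) (fun _ => piL E w) := by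
    funext m
    have : (qSeries p) m (fun _ => w) = ∑ iF : Fin (m + 1), term (p (m + 1)) iF (fun _ => w) := by
      rw [qSeries, ContinuousMultilinearMap.sum_apply]
    rw [this, y_mul_sum_diag]
  rw [hterm] at hs4
  -- subtract and shift the series for f
  have hs5 : HasSum (fun m => p m (fun _ => w) - p m (fun _ => piL E w)) (f w - 0) :=
    hs1.sub hs2
  have hzero : p 0 (fun _ => w) - p 0 (fun _ => piL E w) = 0 := by
    have : (fun _ : Fin 0 => w) = (fun _ : Fin 0 => piL E w) := by
      funext s; exact absurd s.isLt (by omega)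
    rw [this, sub_self]
  have hs6 : HasSum (fun m => p (m + 1) (fun _ => w) - p (m + 1) (fun _ => piL E w))
      ((f w - 0) - ∑ i ∈ Finset.range 1, (p i (fun _ => w) - p i (fun _ => piL E w))) :=
    (hasSum_nat_add_iff' 1).mpr hs5
  rw [Finset.sum_range_one, hzero, sub_zero, sub_zero] at hs6
  exact (hs4.unique hs6).symm

end MyDiv4

namespace MyCalc
open MyDiv MyDiv2 MyDiv3 MyDiv4

lemma analyticAt_deriv {h : ℝ → ℝ} {x : ℝ} (hh : AnalyticAt ℝ h x) :
    AnalyticAt ℝ (deriv h) x := by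
  obtain ⟨t, ht, hto, hxt⟩ := eventually_nhds_iff.mp hh.eventually_analyticAt
  exact (AnalyticOnNhd.deriv (fun y hy => ht y hy)) x hxt

lemma iterDeriv_pow_mul :
    ∀ (m : ℕ) (h : ℝ → ℝ), AnalyticAt ℝ h 0 → ∀ j ≤ m,
      iteratedDeriv j (fun y : ℝ => y ^ m * h y) 0 =
        if j = m then (m.factorial : ℝ) * h 0 else 0 := by
  intro m
  induction m with
  | zero =>
    intro h hh j hj
    interval_cases j
    simp [iteratedDeriv_zero]
  | succ m ih =>
    intro h hh j hj
    match j with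
    | 0 =>
      rw [iteratedDeriv_zero]
      simp
    | j' + 1 =>
      rw [iteratedDeriv_succ']
      have hev : deriv (fun y : ℝ => y ^ (m + 1) * h y) =ᶠ[nhds 0]
          (fun y : ℝ => y ^ m * (((m : ℝ) + 1) * h y + y * deriv h y)) := by
        filter_upwards [hh.eventually_analyticAt] with y hy
        rw [deriv_fun_mul (differentiableAt_pow _) hy.differentiableAt, deriv_pow_field, Nat.add_sub_cancel]
        push_cast
        ring
      rw [Filter.EventuallyEq.iteratedDeriv_eq j' hev]
      have hh1 : AnalyticAt ℝ (fun y : ℝ => ((m : ℝ) + 1) * h y + y * deriv h y) 0 := by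
        exact (analyticAt_const.mul hh).add
          ((analyticAt_id).mul (analyticAt_deriv hh))
      rw [ih _ hh1 j' (Nat.succ_le_succ_iff.mp hj)]
      by_cases hj' : j' = m
      · subst hj'
        rw [if_pos rfl, if_pos rfl]
        rw [Nat.factorial_succ]
        push_cast
        ring
      · rw [if_neg hj', if_neg (by omega)]

lemma iterDeriv_monomial :
    ∀ (j l : ℕ) (c : ℝ),
      iteratedDeriv j (fun y : ℝ => c * y ^ l) 0 =
        if j = l then (l.factorial : ℝ) * c else 0 := by
  intro j
  induction j with
  | zero =>
    intro l c
    rw [iteratedDeriv_zero]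
    match l with
    | 0 => simp
    | l' + 1 => simp [zero_pow]
  | succ j ih =>
    intro l c
    rw [iteratedDeriv_succ']
    match l with
    | 0 =>
      have hz : deriv (fun y : ℝ => c * y ^ 0) = fun y : ℝ => (0 : ℝ) * y ^ 0 := by
        funext y
        simp [deriv_const']
      rw [hz, ih 0 0]
      simp
    | l' + 1 =>
      have hz : deriv (fun y : ℝ => c * y ^ (l' + 1)) =
          fun y : ℝ => (c * ((l' : ℝ) + 1)) * y ^ l' := by
        funext y
        rw [deriv_const_mul _ (differentiableAt_pow _), deriv_pow_field, Nat.add_sub_cancel]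
        push_cast
        ring
      rw [hz, ih l' (c * ((l' : ℝ) + 1))]
      by_cases hj : j = l'
      · subst hj
        rw [if_pos rfl, if_pos rfl, Nat.factorial_succ]
        push_cast
        ring
      · rw [if_neg hj, if_neg (by omega)]

lemma iteratedDeriv_add_at :
    ∀ (n : ℕ) (x : ℝ) (f g : ℝ → ℝ), AnalyticAt ℝ f x → AnalyticAt ℝ g x →
      iteratedDeriv n (fun y => f y + g y) x = iteratedDeriv n f x + iteratedDeriv n g x := by
  intro n
  induction n with
  | zero => intro x f g _ _; simp [iteratedDeriv_zero]
  | succ n ih =>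
    intro x f g hf hg
    rw [iteratedDeriv_succ', iteratedDeriv_succ', iteratedDeriv_succ']
    have hev : deriv (fun y => f y + g y) =ᶠ[nhds x] fun y => deriv f y + deriv g y := by
      filter_upwards [hf.eventually_analyticAt, hg.eventually_analyticAt] with y hyf hyg
      exact deriv_add hyf.differentiableAt hyg.differentiableAt
    rw [Filter.EventuallyEq.iteratedDeriv_eq n hev]
    exact ih x _ _ (analyticAt_deriv hf) (analyticAt_deriv hg)

lemma analyticAt_monomial (c : ℝ) (l : ℕ) (x : ℝ) :
    AnalyticAt ℝ (fun y : ℝ => c * y ^ l) x :=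
  analyticAt_const.mul (analyticAt_id.pow l)

lemma analyticAt_polysum (d : ℕ) (a : ℕ → ℝ) (x : ℝ) :
    AnalyticAt ℝ (fun y : ℝ => ∑ l ∈ Finset.range d, a l * y ^ l) x := by
  induction d with
  | zero => simpa using (analyticAt_const : AnalyticAt ℝ (fun _ : ℝ => (0 : ℝ)) x)
  | succ d ih =>
    have : (fun y : ℝ => ∑ l ∈ Finset.range (d + 1), a l * y ^ l) =
        fun y : ℝ => (∑ l ∈ Finset.range d, a l * y ^ l) + a d * y ^ d := by
      funext y; rw [Finset.sum_range_succ]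
    rw [this]
    exact ih.add (analyticAt_monomial (a d) d x)

lemma iterDeriv_polysum (d : ℕ) (a : ℕ → ℝ) (j : ℕ) :
    iteratedDeriv j (fun y : ℝ => ∑ l ∈ Finset.range d, a l * y ^ l) 0 =
      if j < d then (j.factorial : ℝ) * a j else 0 := by
  induction d with
  | zero =>
    have h0 : (fun y : ℝ => ∑ l ∈ Finset.range 0, a l * y ^ l) =
        fun y : ℝ => (0 : ℝ) * y ^ 0 := by
      funext y; simp
    rw [h0, iterDeriv_monomial]
    simp
  | succ d ih =>
    have hsp : (fun y : ℝ => ∑ l ∈ Finset.range (d + 1), a l * y ^ l) =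
        fun y : ℝ => (∑ l ∈ Finset.range d, a l * y ^ l) + a d * y ^ d := by
      funext y; rw [Finset.sum_range_succ]
    rw [hsp, iteratedDeriv_add_at j 0 _ _ (analyticAt_polysum d a 0)
      (analyticAt_monomial (a d) d 0), ih, iterDeriv_monomial]
    by_cases h1 : j < d
    · rw [if_pos h1, if_neg (by omega), if_pos (by omega), add_zero]
    · by_cases h2 : j = d
      · subst h2
        rw [if_neg (by omega), if_pos rfl, if_pos (by omega), zero_add]
      · rw [if_neg h1, if_neg h2, if_neg (by omega), add_zero]

end MyCalc

namespace MyCalc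

lemma analyticAt_xmono {n : ℕ} (e : Fin n → ℕ) (x₀ : Fin n → ℝ) :
    AnalyticAt ℝ (fun x : Fin n → ℝ => ∏ j, x j ^ e j) x₀ :=
  Finset.analyticAt_fun_prod _ fun j _ =>
    ((ContinuousLinearMap.proj j : (Fin n → ℝ) →L[ℝ] ℝ).analyticAt x₀).pow (e j)

end MyCalc



/-- The `i`-th partial derivative of `G(x,y)` with respect to `y`. -/
noncomputable def yDeriv {n : ℕ} (G : (Fin n → ℝ) × ℝ → ℝ) (i : ℕ)
    (x : Fin n → ℝ) (y : ℝ) : ℝ :=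
  iteratedDeriv i (fun t => G (x, t)) y

/-- `G` is `y`-regular of order `k` at `(x₀, y₀)`. -/
def YRegular {n : ℕ} (G : (Fin n → ℝ) × ℝ → ℝ) (k : ℕ)
    (x₀ : Fin n → ℝ) (y₀ : ℝ) : Prop :=
  yDeriv G k x₀ y₀ ≠ 0 ∧ ∀ j < k, yDeriv G j x₀ y₀ = 0

/-- Lemma 4.5 (analytic case): with `cᵢ(x) = (∂ⁱG/∂yⁱ)(x,0)`, if each `cᵢ` (`i < d`) is
divisible by `x^{α(d-i)}` with quotient `cᵢ*`, and `c_k*(0) ≠ 0` for some `k < d`, then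
`H(x,y) = x^{-αd}·G(x, x^α y)` extends to an analytic function near `(0,0)` which is
`y`-regular of order at most `k` at `(0,0)`. -/
theorem lemma_machine2
    (n : ℕ) (U : Set ((Fin n → ℝ) × ℝ)) (hU : U ∈ nhds ((0, 0) : (Fin n → ℝ) × ℝ))
    (G : (Fin n → ℝ) × ℝ → ℝ) (hG : AnalyticOnNhd ℝ G U)
    (d : ℕ) (hd : 0 < d) (hreg : YRegular G d 0 0)
    (α : Fin n → ℕ)
    (cstar : ℕ → (Fin n → ℝ) → ℝ)
    (hcstar : ∀ i < d, ∀ᶠ x in nhds (0 : Fin n → ℝ),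
      AnalyticAt ℝ (cstar i) x ∧
        yDeriv G i x 0 = (∏ j, x j ^ ((d - i) * α j)) * cstar i x)
    (k : ℕ) (hk : k < d) (hk0 : cstar k 0 ≠ 0) :
    ∃ V ∈ nhds ((0, 0) : (Fin n → ℝ) × ℝ), ∃ H : (Fin n → ℝ) × ℝ → ℝ,
      AnalyticOnNhd ℝ H V ∧
      (∀ p ∈ V, (∏ j, p.1 j ^ (d * α j)) * H p = G (p.1, (∏ j, p.1 j ^ α j) * p.2)) ∧
      ∃ k' ≤ k, YRegular H k' 0 0 := by
  classical
  have hzz : ((0, 0) : (Fin n → ℝ) × ℝ) = (0 : (Fin n → ℝ) × ℝ) := rfl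
  have hG0 : ∀ᶠ q in nhds (0 : (Fin n → ℝ) × ℝ), AnalyticAt ℝ G q := by
    rw [← hzz]
    exact Filter.eventually_of_mem hU fun q hq => hG q hq
  have hcs : ∀ᶠ x in nhds (0 : Fin n → ℝ), ∀ i ∈ Finset.range d,
      AnalyticAt ℝ (cstar i) x ∧
        yDeriv G i x 0 = (∏ j, x j ^ ((d - i) * α j)) * cstar i x :=
    (Filter.eventually_all_finset _).mpr fun i hi => hcstar i (Finset.mem_range.mp hi)
  obtain ⟨W, hW_all, hW_open, hW_mem⟩ := eventually_nhds_iff.mp hcs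
  set F : (Fin n → ℝ) × ℝ → ℝ := fun q => G q -
    ∑ l ∈ Finset.range d,
      (((∏ j, q.1 j ^ ((d - l) * α j)) * cstar l q.1) / (l.factorial : ℝ)) * q.2 ^ l
    with hFdef
  have hfst : Filter.Tendsto (fun q : (Fin n → ℝ) × ℝ => q.1)
      (nhds (0 : (Fin n → ℝ) × ℝ)) (nhds (0 : Fin n → ℝ)) :=
    continuous_fst.tendsto (0 : (Fin n → ℝ) × ℝ)
  have hcoeff : ∀ᶠ q in nhds (0 : (Fin n → ℝ) × ℝ), ∀ l ∈ Finset.range d,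
      AnalyticAt ℝ (fun p : (Fin n → ℝ) × ℝ =>
        (((∏ j, p.1 j ^ ((d - l) * α j)) * cstar l p.1) / (l.factorial : ℝ)) * p.2 ^ l) q := by
    filter_upwards [hfst.eventually hcs] with q hq l hl
    have h1 : AnalyticAt ℝ (fun x : Fin n → ℝ =>
        (∏ j, x j ^ ((d - l) * α j)) * cstar l x) q.1 :=
      (MyCalc.analyticAt_xmono _ _).mul (hq l hl).1
    have h2 : AnalyticAt ℝ (fun p : (Fin n → ℝ) × ℝ =>
        (∏ j, p.1 j ^ ((d - l) * α j)) * cstar l p.1) q := h1.comp analyticAt_fst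
    have h3 : AnalyticAt ℝ (fun p : (Fin n → ℝ) × ℝ =>
        ((∏ j, p.1 j ^ ((d - l) * α j)) * cstar l p.1) / (l.factorial : ℝ)) q :=
      h2.div analyticAt_const (by exact_mod_cast l.factorial_ne_zero)
    exact h3.mul (analyticAt_snd.pow l)
  have hFa : ∀ᶠ q in nhds (0 : (Fin n → ℝ) × ℝ), AnalyticAt ℝ F q := by
    filter_upwards [hG0, hcoeff] with q h1 h2
    exact h1.sub (Finset.analyticAt_fun_sum _ h2)
  -- inductive division of F by powers of y
  have main : ∀ i, i ≤ d → ∃ R : (Fin n → ℝ) × ℝ → ℝ,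
      AnalyticAt ℝ R (0 : (Fin n → ℝ) × ℝ) ∧
      ∀ᶠ q in nhds (0 : (Fin n → ℝ) × ℝ), F q = q.2 ^ i * R q := by
    intro i
    induction i with
    | zero =>
      intro _
      exact ⟨F, hFa.self_of_nhds,
        Filter.Eventually.of_forall fun q => by rw [pow_zero, one_mul]⟩
    | succ i ih =>
      intro hid
      obtain ⟨R, hR, hFR⟩ := ih (by omega)
      have hAll : ∀ᶠ q in nhds ((0, 0) : (Fin n → ℝ) × ℝ),
          F q = q.2 ^ i * R q ∧ (AnalyticAt ℝ R q ∧ AnalyticAt ℝ G q) := by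
        rw [hzz]
        exact hFR.and (hR.eventually_analyticAt.and hG0)
      obtain ⟨u, hu, v, hv, huv⟩ := mem_nhds_prod_iff.mp hAll
      have hv0 : (0 : ℝ) ∈ v := mem_of_mem_nhds hv
      have hslice : ∀ᶠ x in nhds (0 : Fin n → ℝ), R (x, 0) = 0 := by
        filter_upwards [Filter.eventually_of_mem hu (fun x hx => hx), hcs] with x hxu hxcs
        have hmem0 : ((x, (0 : ℝ)) : (Fin n → ℝ) × ℝ) ∈ u ×ˢ v :=
          Set.mem_prod.mpr ⟨hxu, hv0⟩
        have hP0 := huv hmem0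
        have hRx : AnalyticAt ℝ (fun y => R (x, y)) 0 :=
          hP0.2.1.comp (analyticAt_const.prod analyticAt_id)
        have hGx : AnalyticAt ℝ (fun y => G (x, y)) 0 :=
          hP0.2.2.comp (analyticAt_const.prod analyticAt_id)
        have hEv : (fun y => F (x, y)) =ᶠ[nhds (0 : ℝ)] fun y => y ^ i * R (x, y) :=
          Filter.eventually_of_mem hv fun y hy =>
            (huv (Set.mem_prod.mpr ⟨hxu, hy⟩ : ((x, y) : (Fin n → ℝ) × ℝ) ∈ u ×ˢ v)).1
        have hL : iteratedDeriv i (fun y => F (x, y)) 0 = 0 := by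
          have hFx : (fun y => F (x, y)) = fun y => G (x, y) +
              -(∑ l ∈ Finset.range d,
                (((∏ j, x j ^ ((d - l) * α j)) * cstar l x) / (l.factorial : ℝ)) * y ^ l) := by
            funext y
            simp only [hFdef, sub_eq_add_neg]
          have hnp : AnalyticAt ℝ (fun y : ℝ =>
              -(∑ l ∈ Finset.range d,
                (((∏ j, x j ^ ((d - l) * α j)) * cstar l x) / (l.factorial : ℝ)) * y ^ l)) 0 :=
            (MyCalc.analyticAt_polysum d _ 0).neg
          rw [hFx, MyCalc.iteratedDeriv_add_at i 0 _ _ hGx hnp, iteratedDeriv_fun_neg,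
            MyCalc.iterDeriv_polysum d _ i, if_pos (by omega : i < d)]
          have hyd : iteratedDeriv i (fun y => G (x, y)) 0 =
              (∏ j, x j ^ ((d - i) * α j)) * cstar i x :=
            (hxcs i (Finset.mem_range.mpr (by omega))).2
          rw [hyd]
          have hfac : (i.factorial : ℝ) ≠ 0 := by exact_mod_cast i.factorial_ne_zero
          field_simp
          ring
        have h3 : iteratedDeriv i (fun y => F (x, y)) 0 =
            iteratedDeriv i (fun y => y ^ i * R (x, y)) 0 :=
          Filter.EventuallyEq.iteratedDeriv_eq i hEv
        have h2 : iteratedDeriv i (fun y => y ^ i * R (x, y)) 0 =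
            (i.factorial : ℝ) * R (x, 0) := by
          rw [MyCalc.iterDeriv_pow_mul i _ hRx i le_rfl, if_pos rfl]
        have hfac : (i.factorial : ℝ) ≠ 0 := by exact_mod_cast i.factorial_ne_zero
        have : (i.factorial : ℝ) * R (x, 0) = 0 := by rw [← h2, ← h3, hL]
        exact (mul_eq_zero.mp this).resolve_left hfac
      obtain ⟨g, hg, hgev⟩ := MyDiv4.analytic_div_snd hR hslice
      refine ⟨g, hg, ?_⟩
      filter_upwards [hFR, hgev] with q h1 h2
      rw [h1, h2]
      ring
  obtain ⟨R, hRa, hFR⟩ := main d le_rfl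
  obtain ⟨OF, hOF_all, hOF_open, hOF_mem⟩ := eventually_nhds_iff.mp hFR
  obtain ⟨OR, hOR_all, hOR_open, hOR_mem⟩ :=
    eventually_nhds_iff.mp hRa.eventually_analyticAt
  set H : (Fin n → ℝ) × ℝ → ℝ := fun q =>
    (∑ l ∈ Finset.range d, (cstar l q.1 / (l.factorial : ℝ)) * q.2 ^ l)
      + q.2 ^ d * R (q.1, (∏ j, q.1 j ^ α j) * q.2) with hHdef
  set Φ : (Fin n → ℝ) × ℝ → (Fin n → ℝ) × ℝ :=
    fun q => (q.1, (∏ j, q.1 j ^ α j) * q.2) with hΦdef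
  have hPacont : Continuous fun x : Fin n → ℝ => ∏ j, x j ^ α j :=
    continuous_finset_prod _ fun j _ => (continuous_apply j).pow (α j)
  have hΦc : Continuous Φ :=
    continuous_fst.prodMk ((hPacont.comp continuous_fst).mul continuous_snd)
  have hΦ0 : Φ (0, 0) = (0 : (Fin n → ℝ) × ℝ) := by
    rw [hΦdef]
    simp
  set V : Set ((Fin n → ℝ) × ℝ) := (W ×ˢ (Set.univ : Set ℝ)) ∩ Φ ⁻¹' (OF ∩ OR) with hVdef
  have hV_open : IsOpen V :=
    (hW_open.prod isOpen_univ).inter ((hOF_open.inter hOR_open).preimage hΦc)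
  have hV_mem : ((0, 0) : (Fin n → ℝ) × ℝ) ∈ V := by
    constructor
    · exact Set.mem_prod.mpr ⟨hW_mem, trivial⟩
    · rw [Set.mem_preimage, hΦ0]
      exact ⟨hOF_mem, hOR_mem⟩
  refine ⟨V, hV_open.mem_nhds hV_mem, H, ?_, ?_, ?_⟩
  · -- analyticity of H on V
    intro q hq
    obtain ⟨⟨hqW, -⟩, hqΦ⟩ := hq
    have hsum : AnalyticAt ℝ (fun p : (Fin n → ℝ) × ℝ =>
        ∑ l ∈ Finset.range d, (cstar l p.1 / (l.factorial : ℝ)) * p.2 ^ l) q := by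
      refine Finset.analyticAt_fun_sum _ fun l hl => ?_
      have h1 : AnalyticAt ℝ (cstar l) q.1 := (hW_all q.1 hqW l hl).1
      have h2 : AnalyticAt ℝ (fun p : (Fin n → ℝ) × ℝ => cstar l p.1) q :=
        h1.comp analyticAt_fst
      exact (h2.div analyticAt_const
        (by exact_mod_cast l.factorial_ne_zero)).mul (analyticAt_snd.pow l)
    have hΦa : AnalyticAt ℝ Φ q :=
      analyticAt_fst.prod
        (((MyCalc.analyticAt_xmono α q.1).comp analyticAt_fst).mul analyticAt_snd)
    have hRq : AnalyticAt ℝ R (Φ q) := hOR_all (Φ q) hqΦ.2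
    have htail : AnalyticAt ℝ (fun p : (Fin n → ℝ) × ℝ =>
        p.2 ^ d * R (p.1, (∏ j, p.1 j ^ α j) * p.2)) q :=
      (analyticAt_snd.pow d).mul (hRq.comp hΦa)
    exact hsum.add htail
  · -- the functional identity on V
    intro q hq
    obtain ⟨⟨hqW, -⟩, hqΦ⟩ := hq
    have hFq : F (Φ q) = ((∏ j, q.1 j ^ α j) * q.2) ^ d * R (Φ q) := hOF_all (Φ q) hqΦ.1
    have hGq : G (q.1, (∏ j, q.1 j ^ α j) * q.2) = F (Φ q) +
        ∑ l ∈ Finset.range d,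
          (((∏ j, q.1 j ^ ((d - l) * α j)) * cstar l q.1) / (l.factorial : ℝ))
            * ((∏ j, q.1 j ^ α j) * q.2) ^ l := by
      simp only [hFdef, hΦdef]
      ring
    have fact1 : ∀ l, l ≤ d →
        (∏ j, q.1 j ^ ((d - l) * α j)) * (∏ j, q.1 j ^ α j) ^ l =
          ∏ j, q.1 j ^ (d * α j) := by
      intro l hl
      rw [← Finset.prod_pow]
      rw [← Finset.prod_mul_distrib]
      refine Finset.prod_congr rfl fun j _ => ?_
      rw [← pow_mul, ← pow_add]
      congr 1
      rw [mul_comm (α j) l, ← Nat.add_mul, Nat.sub_add_cancel hl]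
    have fact2 : (∏ j, q.1 j ^ α j) ^ d = ∏ j, q.1 j ^ (d * α j) := by
      have := fact1 d le_rfl
      simpa using this
    rw [hGq, hFq, hHdef]
    rw [mul_add, Finset.mul_sum]
    rw [Finset.sum_congr rfl (fun l hl => ?_), mul_pow, ← fact2]
    · ring
    · -- per-term equality
      have h1 := fact1 l (le_of_lt (Finset.mem_range.mp hl))
      rw [mul_pow, ← h1]
      ring
  · -- y-regularity
    have hyD : ∀ j, j < d → yDeriv H j 0 0 = cstar j 0 := by
      intro j hj
      show iteratedDeriv j (fun t => H ((0 : Fin n → ℝ), t)) 0 = cstar j 0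
      have hψ : AnalyticAt ℝ
          (fun t : ℝ => R ((0 : Fin n → ℝ), (∏ j, (0 : Fin n → ℝ) j ^ α j) * t)) 0 := by
        have h1 : AnalyticAt ℝ
            (fun t : ℝ => (((0 : Fin n → ℝ), (∏ j, (0 : Fin n → ℝ) j ^ α j) * t) :
              (Fin n → ℝ) × ℝ)) 0 :=
          analyticAt_const.prod (analyticAt_const.mul analyticAt_id)
        have h2 : AnalyticAt ℝ R
            (((0 : Fin n → ℝ), (∏ j, (0 : Fin n → ℝ) j ^ α j) * (0 : ℝ)) :
              (Fin n → ℝ) × ℝ) := by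
          rw [mul_zero]
          exact hRa
        exact AnalyticAt.comp
          (f := fun t : ℝ => (((0 : Fin n → ℝ), (∏ j, (0 : Fin n → ℝ) j ^ α j) * t) :
            (Fin n → ℝ) × ℝ)) h2 h1
      have hpoly : AnalyticAt ℝ (fun t : ℝ =>
          ∑ l ∈ Finset.range d, (cstar l (0 : Fin n → ℝ) / (l.factorial : ℝ)) * t ^ l) 0 :=
        MyCalc.analyticAt_polysum d _ 0
      have htail : AnalyticAt ℝ (fun t : ℝ =>
          t ^ d * R ((0 : Fin n → ℝ), (∏ j, (0 : Fin n → ℝ) j ^ α j) * t)) 0 :=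
        (analyticAt_id.pow d).mul hψ
      have hsl : (fun t => H ((0 : Fin n → ℝ), t)) = fun t =>
          (∑ l ∈ Finset.range d, (cstar l (0 : Fin n → ℝ) / (l.factorial : ℝ)) * t ^ l)
            + t ^ d * R ((0 : Fin n → ℝ), (∏ j, (0 : Fin n → ℝ) j ^ α j) * t) := by
        funext t
        simp only [hHdef]
      rw [hsl, MyCalc.iteratedDeriv_add_at j 0 _ _ hpoly htail,
        MyCalc.iterDeriv_polysum d _ j, if_pos hj,
        MyCalc.iterDeriv_pow_mul d _ hψ j (le_of_lt hj), if_neg (by omega), add_zero]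
      have hfac : (j.factorial : ℝ) ≠ 0 := by exact_mod_cast j.factorial_ne_zero
      field_simp
    have hex : ∃ j, j ≤ k ∧ cstar j 0 ≠ 0 := ⟨k, le_rfl, hk0⟩
    refine ⟨Nat.find hex, (Nat.find_spec hex).1, ?_, ?_⟩
    · rw [hyD _ (lt_of_le_of_lt (Nat.find_spec hex).1 hk)]
      exact (Nat.find_spec hex).2
    · intro j hj
      have hjk : j ≤ k := le_trans (le_of_lt hj) (Nat.find_spec hex).1
      rw [hyD j (by omega)]
      by_contra hne
      exact (Nat.find_min hex hj) ⟨hjk, hne⟩
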